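/- Let q be a primitive m-th root of unity in K and let α, β, λ₁, λ₂ ∈ K be nonzero. On the K-vector space N₁ with basis {e(a,b) : 0 ≤ a ≤ m−1, 0 ≤ b ≤ m−1} the formulas e(a,b)·Z11 = q^b·e(a+1,b) for a < m−1 and q^b·α·e(0,b) for a = m−1; e(a,b)·Z12 = q^{b−a}·λ₂·e(a,b−1) for b > 0 and β^{−1}·λ₂·q^{−a}·e(a,m−1) for b = 0; e(a,b)·Z21 = e(a,b+1) for b < m−1 and β·e(a,0) for b = m−1; e(a,b)·Z22 = (λ₁ + q·λ₂ − q·(1−q^{−a})·λ₂)·e(a−1,b) for a > 0 and α^{−1}·(λ₁ + q·λ₂)·e(m−1,b) for a = 0, define a right Mat₂(q)-module structure on N₁, and this module is simple of K-dimension m². -/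

import Mathlib

noncomputable section

open FreeAlgebra MulOpposite

/-- The relations of the Dipper–Donkin quantized matrix algebra of rank 2:
`Z12·Z11 = Z11·Z12`, `Z21·Z11 = q·Z11·Z21`, `Z22·Z21 = Z21·Z22`, `Z22·Z12 = q·Z12·Z22`,
`Z21·Z12 = q·Z12·Z21`, `Z22·Z11 = Z11·Z22 + (q−1)·Z12·Z21`, where the generators
`Z11, Z12, Z21, Z22` are the images of `0, 1, 2, 3 : Fin 4`. -/
inductive DDrel {K : Type*} [Field K] (q : K) :
    FreeAlgebra K (Fin 4) → FreeAlgebra K (Fin 4) → Prop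
  | r1 : DDrel q (ι K (1 : Fin 4) * ι K (0 : Fin 4)) (ι K (0 : Fin 4) * ι K (1 : Fin 4))
  | r2 : DDrel q (ι K (2 : Fin 4) * ι K (0 : Fin 4)) (q • (ι K (0 : Fin 4) * ι K (2 : Fin 4)))
  | r3 : DDrel q (ι K (3 : Fin 4) * ι K (2 : Fin 4)) (ι K (2 : Fin 4) * ι K (3 : Fin 4))
  | r4 : DDrel q (ι K (3 : Fin 4) * ι K (1 : Fin 4)) (q • (ι K (1 : Fin 4) * ι K (3 : Fin 4)))
  | r5 : DDrel q (ι K (2 : Fin 4) * ι K (1 : Fin 4)) (q • (ι K (1 : Fin 4) * ι K (2 : Fin 4)))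
  | r6 : DDrel q (ι K (3 : Fin 4) * ι K (0 : Fin 4))
      (ι K (0 : Fin 4) * ι K (3 : Fin 4) + (q - 1) • (ι K (1 : Fin 4) * ι K (2 : Fin 4)))

/-- The Dipper–Donkin quantized matrix algebra `Mat₂(q)`: the quotient of the free
`K`-algebra on four generators by the two-sided ideal generated by the relations above. -/
abbrev DDMat2 {K : Type*} [Field K] (q : K) := RingQuot (DDrel q)

variable {K : Type*} [Field K]

/-- The generator `Z11` of `Mat₂(q)`. -/
def Z11 (q : K) : DDMat2 q := RingQuot.mkAlgHom K (DDrel q) (ι K (0 : Fin 4))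
/-- The generator `Z12` of `Mat₂(q)`. -/
def Z12 (q : K) : DDMat2 q := RingQuot.mkAlgHom K (DDrel q) (ι K (1 : Fin 4))
/-- The generator `Z21` of `Mat₂(q)`. -/
def Z21 (q : K) : DDMat2 q := RingQuot.mkAlgHom K (DDrel q) (ι K (2 : Fin 4))
/-- The generator `Z22` of `Mat₂(q)`. -/
def Z22 (q : K) : DDMat2 q := RingQuot.mkAlgHom K (DDrel q) (ι K (3 : Fin 4))

variable (q : K)

/-- The action of `Z11` on the module `N₁`, written in coordinates with respect to the
basis `e(a,b)`, `a b : Fin m`:  `e(a,b)·Z11 = q^b·e(a+1,b)` for `a < m−1` and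
`q^b·α·e(0,b)` for `a = m−1` (addition in `Fin m` is cyclic). -/
def T11 (α : K) (m : ℕ) [NeZero m] :
    ((Fin m × Fin m) → K) →ₗ[K] ((Fin m × Fin m) → K) where
  toFun v p := (if (p.1 : ℕ) = 0 then α else 1) * q ^ (p.2 : ℕ) * v (p.1 - 1, p.2)
  map_add' x y := by funext p; simp [mul_add]
  map_smul' c x := by funext p; simp [smul_eq_mul]; ring

/-- The action of `Z12` on the module `N₁` in coordinates:
`e(a,b)·Z12 = q^{b−a}·λ₂·e(a,b−1)` for `b > 0` and `β⁻¹·λ₂·q^{−a}·e(a,m−1)` for `b = 0`. -/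
def T12 (β lb : K) (m : ℕ) [NeZero m] :
    ((Fin m × Fin m) → K) →ₗ[K] ((Fin m × Fin m) → K) where
  toFun v p := (if (p.2 : ℕ) = m - 1 then β⁻¹ * lb * q⁻¹ ^ (p.1 : ℕ)
      else lb * q ^ ((p.2 : ℕ) + 1) * q⁻¹ ^ (p.1 : ℕ)) * v (p.1, p.2 + 1)
  map_add' x y := by funext p; simp [mul_add]
  map_smul' c x := by funext p; simp [smul_eq_mul]; ring

/-- The action of `Z21` on the module `N₁` in coordinates:
`e(a,b)·Z21 = e(a,b+1)` for `b < m−1` and `β·e(a,0)` for `b = m−1`. -/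
def T21 (β : K) (m : ℕ) [NeZero m] :
    ((Fin m × Fin m) → K) →ₗ[K] ((Fin m × Fin m) → K) where
  toFun v p := (if (p.2 : ℕ) = 0 then β else 1) * v (p.1, p.2 - 1)
  map_add' x y := by funext p; simp [mul_add]
  map_smul' c x := by funext p; simp [smul_eq_mul]; ring

/-- The action of `Z22` on the module `N₁` in coordinates:
`e(a,b)·Z22 = (λ₁ + q·λ₂ − q·(1−q^{−a})·λ₂)·e(a−1,b)` for `a > 0` and
`α⁻¹·(λ₁ + q·λ₂)·e(m−1,b)` for `a = 0`. -/
def T22 (α la lb : K) (m : ℕ) [NeZero m] :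
    ((Fin m × Fin m) → K) →ₗ[K] ((Fin m × Fin m) → K) where
  toFun v p := (if (p.1 : ℕ) = m - 1 then α⁻¹ * (la + q * lb)
      else la + q * lb - q * (1 - q⁻¹ ^ ((p.1 : ℕ) + 1)) * lb) * v (p.1 + 1, p.2)
  map_add' x y := by funext p; simp [mul_add]
  map_smul' c x := by funext p; simp [smul_eq_mul]; ring

-- AUX START
section DDAux
variable {K : Type*} [Field K]

lemma dd_hq0 {q : K} {n : ℕ} (hq1 : q ^ (n + 1) = 1) : q ≠ 0 := by
  rintro rfl; simp at hq1

lemma dd_hqn {q : K} {n : ℕ} (hq1 : q ^ (n + 1) = 1) : q ^ n = q⁻¹ := by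
  have h0 := dd_hq0 hq1
  field_simp
  rw [← pow_succ]; exact hq1

lemma dd_hQn {q : K} {n : ℕ} (hq1 : q ^ (n + 1) = 1) : q⁻¹ ^ n = q := by
  rw [inv_pow, dd_hqn hq1, inv_inv]

lemma dd_h1 {q : K} {n : ℕ} (hq1 : q ^ (n + 1) = 1) (a : Fin (n + 1)) :
    q⁻¹ ^ ((a - 1 : Fin (n + 1)) : ℕ) = q * q⁻¹ ^ (a : ℕ) := by
  have h0 := dd_hq0 hq1
  rw [Fin.coe_sub_one]
  by_cases ha : a = 0
  · simp [ha, dd_hQn hq1]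
  · have hv : (a : ℕ) ≠ 0 := fun h => ha (Fin.ext (by rw [h]; simp))
    rw [if_neg ha]
    obtain ⟨c, hc⟩ : ∃ c, (a : ℕ) = c + 1 := ⟨(a : ℕ) - 1, by omega⟩
    rw [hc, Nat.add_sub_cancel, pow_succ]
    field_simp

lemma dd_h2 {q : K} {n : ℕ} (hq1 : q ^ (n + 1) = 1) (b : Fin (n + 1)) :
    q ^ ((b + 1 : Fin (n + 1)) : ℕ) = q * q ^ (b : ℕ) := by
  rw [Fin.val_add_one]
  by_cases hb : b = Fin.last n
  · rw [if_pos hb, hb, pow_zero, Fin.val_last, ← pow_succ']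
    exact hq1.symm
  · rw [if_neg hb, pow_succ]; ring

lemma dd_h3 {q : K} {n : ℕ} (hq1 : q ^ (n + 1) = 1) (b : Fin (n + 1)) :
    q ^ ((b - 1 : Fin (n + 1)) : ℕ) = q⁻¹ * q ^ (b : ℕ) := by
  have h0 := dd_hq0 hq1
  rw [Fin.coe_sub_one]
  by_cases hb : b = 0
  · simp [hb, dd_hqn hq1]
  · have hv : (b : ℕ) ≠ 0 := fun h => hb (Fin.ext (by rw [h]; simp))
    rw [if_neg hb]
    obtain ⟨c, hc⟩ : ∃ c, (b : ℕ) = c + 1 := ⟨(b : ℕ) - 1, by omega⟩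
    rw [hc, Nat.add_sub_cancel, pow_succ]
    field_simp

lemma dd_h4 {q : K} {n : ℕ} (hq1 : q ^ (n + 1) = 1) (a : Fin (n + 1)) :
    q⁻¹ ^ ((a + 1 : Fin (n + 1)) : ℕ) = q⁻¹ * q⁻¹ ^ (a : ℕ) := by
  have h0 := dd_hq0 hq1
  rw [Fin.val_add_one]
  by_cases ha : a = Fin.last n
  · rw [if_pos ha, ha, pow_zero, Fin.val_last, dd_hQn hq1]
    field_simp
  · rw [if_neg ha, pow_succ]; ring

lemma dd_h5 {n : ℕ} (b : Fin (n + 1)) :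
    (((b + 1 : Fin (n + 1)) : ℕ) = 0) ↔ ((b : ℕ) = n) := by
  rw [Fin.val_add_one]
  by_cases hb : b = Fin.last n
  · simp [hb]
  · have : (b : ℕ) ≠ n := by simpa [Fin.ext_iff] using hb
    simp [hb, this]

lemma dd_h6 {n : ℕ} (b : Fin (n + 1)) :
    (((b - 1 : Fin (n + 1)) : ℕ) = n) ↔ ((b : ℕ) = 0) := by
  rw [Fin.coe_sub_one]
  by_cases hb : b = 0
  · simp [hb]
  · have hv : (b : ℕ) ≠ 0 := fun h => hb (Fin.ext (by rw [h]; simp))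
    have hlt : (b : ℕ) < n + 1 := b.isLt
    simp only [if_neg hb]
    constructor
    · intro h; omega
    · intro h; omega

end DDAux
-- AUX END

section DDRel
variable {K : Type*} [Field K]

lemma dd_rel1 (q α β lb : K) (n : ℕ) (hq1 : q ^ (n + 1) = 1)
    (v : (Fin (n + 1) × Fin (n + 1)) → K) (p : Fin (n + 1) × Fin (n + 1)) :
    T11 q α (n + 1) (T12 q β lb (n + 1) v) p = T12 q β lb (n + 1) (T11 q α (n + 1) v) p := by
  have h0 := dd_hq0 hq1
  obtain ⟨a, b⟩ := p
  simp only [T11, T12, LinearMap.coe_mk, AddHom.coe_mk, Nat.add_sub_cancel,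
    dd_h1 hq1 a, dd_h2 hq1 b]
  split_ifs <;> ring

lemma dd_rel2 (q α β : K) (n : ℕ) (hq1 : q ^ (n + 1) = 1)
    (v : (Fin (n + 1) × Fin (n + 1)) → K) (p : Fin (n + 1) × Fin (n + 1)) :
    T11 q α (n + 1) (T21 β (n + 1) v) p = q * T21 β (n + 1) (T11 q α (n + 1) v) p := by
  have h0 := dd_hq0 hq1
  obtain ⟨a, b⟩ := p
  simp only [T11, T21, LinearMap.coe_mk, AddHom.coe_mk, dd_h3 hq1 b]
  split_ifs <;> field_simp <;> ring

lemma dd_rel3 (q α β la lb : K) (n : ℕ)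
    (v : (Fin (n + 1) × Fin (n + 1)) → K) (p : Fin (n + 1) × Fin (n + 1)) :
    T21 β (n + 1) (T22 q α la lb (n + 1) v) p = T22 q α la lb (n + 1) (T21 β (n + 1) v) p := by
  obtain ⟨a, b⟩ := p
  simp only [T21, T22, LinearMap.coe_mk, AddHom.coe_mk, Nat.add_sub_cancel]
  split_ifs <;> ring

set_option maxHeartbeats 2000000 in
lemma dd_rel4 (q α β la lb : K) (n : ℕ) (hα : α ≠ 0) (hβ : β ≠ 0) (hq1 : q ^ (n + 1) = 1)
    (v : (Fin (n + 1) × Fin (n + 1)) → K) (p : Fin (n + 1) × Fin (n + 1)) :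
    T12 q β lb (n + 1) (T22 q α la lb (n + 1) v) p
      = q * T22 q α la lb (n + 1) (T12 q β lb (n + 1) v) p := by
  have h0 := dd_hq0 hq1
  obtain ⟨a, b⟩ := p
  simp only [T12, T22, LinearMap.coe_mk, AddHom.coe_mk, Nat.add_sub_cancel,
    dd_h4 hq1 a]
  simp only [inv_pow]
  split_ifs <;>
    (first
      | (field_simp <;> ring1)
      | (field_simp; rw [eq_div_iff (by simp_all [pow_ne_zero])]; ring1)
      | (field_simp; rw [div_eq_iff (by simp_all [pow_ne_zero])]; ring1))

set_option maxHeartbeats 4000000 in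
lemma dd_rel5 (q β lb : K) (n : ℕ) (hβ : β ≠ 0) (hq1 : q ^ (n + 1) = 1)
    (v : (Fin (n + 1) × Fin (n + 1)) → K) (p : Fin (n + 1) × Fin (n + 1)) :
    T12 q β lb (n + 1) (T21 β (n + 1) v) p = q * T21 β (n + 1) (T12 q β lb (n + 1) v) p := by
  have h0 := dd_hq0 hq1
  obtain ⟨a, b⟩ := p
  simp only [T12, T21, LinearMap.coe_mk, AddHom.coe_mk, Nat.add_sub_cancel,
    add_sub_cancel_right, sub_add_cancel, dd_h5, dd_h6, pow_succ, dd_h3 hq1 b]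
  rcases Nat.eq_zero_or_pos n with hn | hn
  · subst hn
    have hq : q = 1 := by simpa using hq1
    subst hq
    simp
    field_simp
  · have hb : (b : ℕ) < n + 1 := b.isLt
    by_cases hbn : (b : ℕ) = n
    · have hb0 : ¬ (b : ℕ) = 0 := by omega
      simp_all [dd_hqn hq1, inv_pow]
      first
      | (field_simp <;> ring1)
      | (field_simp; rw [eq_div_iff (by simp_all [pow_ne_zero])]; ring1)
      | (field_simp; rw [div_eq_iff (by simp_all [pow_ne_zero])]; ring1)
    · by_cases hb0 : (b : ℕ) = 0
      · simp_all [dd_hqn hq1, inv_pow]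
        first
        | (field_simp <;> ring1)
        | (field_simp; rw [eq_div_iff (by simp_all [pow_ne_zero])]; ring1)
        | (field_simp; rw [div_eq_iff (by simp_all [pow_ne_zero])]; ring1)
      · simp_all [dd_hqn hq1, inv_pow]
        first
        | (field_simp <;> ring1)
        | (field_simp; rw [eq_div_iff (by simp_all [pow_ne_zero])]; ring1)
        | (field_simp; rw [div_eq_iff (by simp_all [pow_ne_zero])]; ring1)

set_option maxHeartbeats 4000000 in
lemma dd_rel6 (q α β la lb : K) (n : ℕ) (hα : α ≠ 0) (hβ : β ≠ 0) (hq1 : q ^ (n + 1) = 1)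
    (v : (Fin (n + 1) × Fin (n + 1)) → K) (p : Fin (n + 1) × Fin (n + 1)) :
    T11 q α (n + 1) (T22 q α la lb (n + 1) v) p
      = T22 q α la lb (n + 1) (T11 q α (n + 1) v) p
        + (q - 1) * T21 β (n + 1) (T12 q β lb (n + 1) v) p := by
  have h0 := dd_hq0 hq1
  obtain ⟨a, b⟩ := p
  simp only [T11, T12, T21, T22, LinearMap.coe_mk, AddHom.coe_mk, Nat.add_sub_cancel,
    add_sub_cancel_right, sub_add_cancel, dd_h5, dd_h6, pow_succ,
    dd_h1 hq1 a, dd_h3 hq1 b]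
  rcases Nat.eq_zero_or_pos n with hn | hn
  · subst hn
    have hq : q = 1 := by simpa using hq1
    subst hq
    simp
    first
    | ring1
    | (field_simp <;> ring1)
    | (field_simp; rw [eq_div_iff (by simp_all [pow_ne_zero])]; ring1)
    | (field_simp; rw [div_eq_iff (by simp_all [pow_ne_zero])]; ring1)
  · have hbb : (b : ℕ) < n + 1 := b.isLt
    have haa : (a : ℕ) < n + 1 := a.isLt
    have key : ∀ x : Fin (n+1), True := fun _ => trivial
    by_cases han : (a : ℕ) = n <;> by_cases ha0 : (a : ℕ) = 0 <;> by_cases hb0 : (b : ℕ) = 0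
    all_goals try (exfalso; omega)
    all_goals simp_all [dd_hqn hq1, dd_hQn hq1, inv_pow]
    all_goals
      first
      | (field_simp <;> ring1)
      | (field_simp; rw [eq_div_iff (by simp_all [pow_ne_zero])]; ring1)
      | (field_simp; rw [div_eq_iff (by simp_all [pow_ne_zero])]; ring1)

end DDRel

open Fin.NatCast Fin.CommRing

section DDSimpleAux
variable {K : Type*} [Field K]

set_option maxHeartbeats 1000000 in
lemma dd_diagD (q β lb : K) (n : ℕ) (hβ : β ≠ 0) (hq1 : q ^ (n + 1) = 1)
    (v : (Fin (n + 1) × Fin (n + 1)) → K) (p : Fin (n + 1) × Fin (n + 1)) :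
    T12 q β lb (n + 1) (T21 β (n + 1) v) p
      = (lb * q ^ ((p.2 : ℕ) + 1) * q⁻¹ ^ (p.1 : ℕ)) * v p := by
  have h0 := dd_hq0 hq1
  obtain ⟨a, b⟩ := p
  simp only [T12, T21, LinearMap.coe_mk, AddHom.coe_mk, Nat.add_sub_cancel,
    add_sub_cancel_right, dd_h5]
  by_cases hbn : (b : ℕ) = n
  · simp only [hbn, if_pos rfl, ↓reduceIte]
    rw [show q ^ (n + 1) = 1 from hq1]
    field_simp
  · simp only [if_neg hbn]
    ring

set_option maxHeartbeats 1000000 in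
lemma dd_diagD2 (q α la lb : K) (n : ℕ) (hα : α ≠ 0) (hq1 : q ^ (n + 1) = 1)
    (v : (Fin (n + 1) × Fin (n + 1)) → K) (p : Fin (n + 1) × Fin (n + 1)) :
    T22 q α la lb (n + 1) (T11 q α (n + 1) v) p
      = (q ^ (p.2 : ℕ) * (la + lb * q⁻¹ ^ (p.1 : ℕ))) * v p := by
  have h0 := dd_hq0 hq1
  obtain ⟨a, b⟩ := p
  simp only [T11, T22, LinearMap.coe_mk, AddHom.coe_mk, Nat.add_sub_cancel,
    add_sub_cancel_right, dd_h5, pow_succ]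
  by_cases han : (a : ℕ) = n
  · simp only [han, if_pos rfl, dd_hQn hq1, ↓reduceIte]
    field_simp
  · simp only [if_neg han]
    field_simp
    ring1

lemma dd_qpow_inj {q : K} {m : ℕ} (hq1 : q ^ m = 1)
    (hq2 : ∀ k : ℕ, 1 ≤ k → k < m → q ^ k ≠ 1) {i j : ℕ} (hi : i < m) (hj : j < m)
    (h : q ^ i = q ^ j) : i = j := by
  have hm : m ≠ 0 := by omega
  have hq0 : q ≠ 0 := by rintro rfl; rw [zero_pow hm] at hq1; exact one_ne_zero hq1.symm
  have key : ∀ i j : ℕ, i < j → j < m → q ^ i = q ^ j → False := by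
    intro i j hij hjm hh
    have h1 : q ^ i * q ^ (j - i) = q ^ i * 1 := by
      rw [mul_one, ← pow_add, show i + (j - i) = j by omega, hh]
    have h2 : q ^ (j - i) = 1 := mul_left_cancel₀ (pow_ne_zero _ hq0) h1
    exact hq2 (j - i) (by omega) (by omega) h2
  rcases lt_trichotomy i j with hij | hij | hij
  · exact absurd (key i j hij hj h) (by simp)
  · exact hij
  · exact absurd (key j i hij hi h.symm) (by simp)

lemma dd_inj (q la lb : K) (n : ℕ) (hq1 : q ^ (n + 1) = 1)
    (hq2 : ∀ k : ℕ, 1 ≤ k → k < n + 1 → q ^ k ≠ 1) (hla : la ≠ 0) (hlb : lb ≠ 0)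
    (p p' : Fin (n + 1) × Fin (n + 1))
    (h1 : lb * q ^ ((p.2 : ℕ) + 1) * q⁻¹ ^ (p.1 : ℕ)
        = lb * q ^ ((p'.2 : ℕ) + 1) * q⁻¹ ^ (p'.1 : ℕ))
    (h2 : q ^ (p.2 : ℕ) * (la + lb * q⁻¹ ^ (p.1 : ℕ))
        = q ^ ((p'.2 : ℕ)) * (la + lb * q⁻¹ ^ ((p'.1 : ℕ)))) :
    p = p' := by
  have h0 := dd_hq0 hq1
  obtain ⟨a, b⟩ := p
  obtain ⟨a', b'⟩ := p'
  simp only at h1 h2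
  have s1 : q ^ (b : ℕ) * lb * q⁻¹ ^ (a : ℕ) = q ^ (b' : ℕ) * lb * q⁻¹ ^ (a' : ℕ) := by
    apply mul_left_cancel₀ h0
    calc q * (q ^ (b : ℕ) * lb * q⁻¹ ^ (a : ℕ))
        = lb * q ^ ((b : ℕ) + 1) * q⁻¹ ^ (a : ℕ) := by rw [pow_succ]; ring
      _ = lb * q ^ ((b' : ℕ) + 1) * q⁻¹ ^ (a' : ℕ) := h1
      _ = q * (q ^ (b' : ℕ) * lb * q⁻¹ ^ (a' : ℕ)) := by rw [pow_succ]; ring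
  have s2 : q ^ (b : ℕ) * la = q ^ (b' : ℕ) * la := by linear_combination h2 - s1
  have hb : (b : ℕ) = (b' : ℕ) :=
    dd_qpow_inj hq1 hq2 b.isLt b'.isLt (mul_right_cancel₀ hla s2)
  have s3 : q⁻¹ ^ (a : ℕ) = q⁻¹ ^ (a' : ℕ) := by
    have hco : q ^ (b : ℕ) * lb ≠ 0 := mul_ne_zero (pow_ne_zero _ h0) hlb
    apply mul_left_cancel₀ hco
    rw [mul_comm] at s1
    calc q ^ (b : ℕ) * lb * q⁻¹ ^ (a : ℕ)
        = q⁻¹ ^ (a : ℕ) * (q ^ (b : ℕ) * lb) := by ring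
      _ = q⁻¹ ^ (a' : ℕ) * (q ^ (b' : ℕ) * lb) := by rw [← mul_comm] at s1; linear_combination s1
      _ = q ^ (b : ℕ) * lb * q⁻¹ ^ (a' : ℕ) := by rw [hb]; ring
  have s4 : q ^ (a : ℕ) = q ^ (a' : ℕ) := by
    rw [inv_pow, inv_pow] at s3
    exact inv_injective s3
  have ha : (a : ℕ) = (a' : ℕ) := dd_qpow_inj hq1 hq2 a.isLt a'.isLt s4
  simp [Prod.ext_iff, Fin.ext_iff, ha, hb]

lemma dd_T21_single (β : K) (n : ℕ) (a b : Fin (n + 1)) (c : K) :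
    T21 β (n + 1) (Pi.single (a, b) c) =
      Pi.single (a, b + 1) ((if ((b + 1 : Fin (n + 1)) : ℕ) = 0 then β else 1) * c) := by
  funext p
  obtain ⟨x, y⟩ := p
  simp only [T21, LinearMap.coe_mk, AddHom.coe_mk]
  by_cases h : (x, y) = (a, b + 1)
  · obtain ⟨rfl, rfl⟩ := Prod.mk.injEq .. ▸ h
    rw [show ((b + 1 - 1 : Fin (n + 1))) = b by ring, Pi.single_eq_same, Pi.single_eq_same]
  · have h2 : (x, y - 1) ≠ (a, b) := by
      rintro h2
      apply h
      obtain ⟨rfl, hy⟩ := Prod.mk.injEq .. ▸ h2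
      have : y = b + 1 := by rw [← hy]; ring
      rw [this]
    rw [Pi.single_eq_of_ne h2, Pi.single_eq_of_ne h, mul_zero]

lemma dd_T11_single (q α : K) (n : ℕ) (a b : Fin (n + 1)) (c : K) :
    T11 q α (n + 1) (Pi.single (a, b) c) =
      Pi.single (a + 1, b) (((if ((a + 1 : Fin (n + 1)) : ℕ) = 0 then α else 1)
        * q ^ (b : ℕ)) * c) := by
  funext p
  obtain ⟨x, y⟩ := p
  simp only [T11, LinearMap.coe_mk, AddHom.coe_mk]
  by_cases h : (x, y) = (a + 1, b)
  · obtain ⟨rfl, rfl⟩ := Prod.mk.injEq .. ▸ h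
    rw [show ((a + 1 - 1 : Fin (n + 1))) = a by ring, Pi.single_eq_same, Pi.single_eq_same]
  · have h2 : (x - 1, y) ≠ (a, b) := by
      rintro h2
      apply h
      obtain ⟨hx, rfl⟩ := Prod.mk.injEq .. ▸ h2
      have : x = a + 1 := by rw [← hx]; ring
      rw [this]
    rw [Pi.single_eq_of_ne h2, Pi.single_eq_of_ne h, mul_zero]

end DDSimpleAux

/-- For `q` a primitive `m`-th root of unity and nonzero scalars
`α, β, λ₁, λ₂`, the formulas above define a right `Mat₂(q)`-module structure on the
`K`-vector space `N₁` with basis `{e(a,b)}` (equivalently, there is a `K`-algebra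
homomorphism `Mat₂(q) →ₐ (End K N₁)ᵐᵒᵖ` sending the generators to the given operators),
this module is simple (the only subspaces invariant under all four operators are `⊥` and
`⊤`), and its `K`-dimension is `m²`. -/
theorem DDMat2_module_N1_welldefined_simple_dim
    (m : ℕ) [NeZero m] (hq1 : q ^ m = 1) (hq2 : ∀ k : ℕ, 1 ≤ k → k < m → q ^ k ≠ 1)
    (α β la lb : K) (hα : α ≠ 0) (hβ : β ≠ 0) (hla : la ≠ 0) (hlb : lb ≠ 0) :
    (∃ ρ : DDMat2 q →ₐ[K] (Module.End K ((Fin m × Fin m) → K))ᵐᵒᵖ,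
        ρ (Z11 q) = op (T11 q α m) ∧ ρ (Z12 q) = op (T12 q β lb m) ∧
        ρ (Z21 q) = op (T21 β m) ∧ ρ (Z22 q) = op (T22 q α la lb m)) ∧
    (∀ W : Submodule K ((Fin m × Fin m) → K),
        (∀ v ∈ W, T11 q α m v ∈ W) → (∀ v ∈ W, T12 q β lb m v ∈ W) →
        (∀ v ∈ W, T21 β m v ∈ W) → (∀ v ∈ W, T22 q α la lb m v ∈ W) →
        W = ⊥ ∨ W = ⊤) ∧
    Module.finrank K ((Fin m × Fin m) → K) = m ^ 2 := by
  obtain ⟨n, rfl⟩ : ∃ n, m = n + 1 :=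
    ⟨m - 1, by have := Nat.pos_of_ne_zero (NeZero.ne m); omega⟩
  have hq0 : q ≠ 0 := dd_hq0 hq1
  classical
  refine ⟨?_, ?_, ?_⟩
  · -- existence of the algebra homomorphism
    let g : Fin 4 → (Module.End K ((Fin (n + 1) × Fin (n + 1)) → K))ᵐᵒᵖ :=
      ![op (T11 q α (n + 1)), op (T12 q β lb (n + 1)), op (T21 β (n + 1)),
        op (T22 q α la lb (n + 1))]
    have hg0 : g 0 = op (T11 q α (n + 1)) := rfl
    have hg1 : g 1 = op (T12 q β lb (n + 1)) := rfl
    have hg2 : g 2 = op (T21 β (n + 1)) := rfl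
    have hg3 : g 3 = op (T22 q α la lb (n + 1)) := rfl
    have hrel : ∀ ⦃x y⦄, DDrel q x y → FreeAlgebra.lift K g x = FreeAlgebra.lift K g y := by
      intro x y h
      induction h with
      | r1 =>
        simp only [map_mul, map_smul, map_add, lift_ι_apply]
        rw [hg0, hg1, ← op_mul, ← op_mul]
        congr 1
        refine LinearMap.ext fun v => funext fun pp => ?_
        simpa only [Module.End.mul_apply] using dd_rel1 q α β lb n hq1 v pp
      | r2 =>
        simp only [map_mul, map_smul, map_add, lift_ι_apply]
        rw [hg0, hg2, ← op_mul, ← op_mul, ← op_smul]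
        congr 1
        refine LinearMap.ext fun v => funext fun pp => ?_
        simpa only [Module.End.mul_apply, LinearMap.smul_apply, Pi.smul_apply,
          smul_eq_mul] using dd_rel2 q α β n hq1 v pp
      | r3 =>
        simp only [map_mul, map_smul, map_add, lift_ι_apply]
        rw [hg2, hg3, ← op_mul, ← op_mul]
        congr 1
        refine LinearMap.ext fun v => funext fun pp => ?_
        simpa only [Module.End.mul_apply] using dd_rel3 q α β la lb n v pp
      | r4 =>
        simp only [map_mul, map_smul, map_add, lift_ι_apply]
        rw [hg1, hg3, ← op_mul, ← op_mul, ← op_smul]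
        congr 1
        refine LinearMap.ext fun v => funext fun pp => ?_
        simpa only [Module.End.mul_apply, LinearMap.smul_apply, Pi.smul_apply,
          smul_eq_mul] using dd_rel4 q α β la lb n hα hβ hq1 v pp
      | r5 =>
        simp only [map_mul, map_smul, map_add, lift_ι_apply]
        rw [hg1, hg2, ← op_mul, ← op_mul, ← op_smul]
        congr 1
        refine LinearMap.ext fun v => funext fun pp => ?_
        simpa only [Module.End.mul_apply, LinearMap.smul_apply, Pi.smul_apply,
          smul_eq_mul] using dd_rel5 q β lb n hβ hq1 v pp
      | r6 =>
        simp only [map_mul, map_smul, map_add, lift_ι_apply]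
        rw [hg0, hg1, hg2, hg3, ← op_mul, ← op_mul, ← op_mul, ← op_smul, ← op_add]
        congr 1
        refine LinearMap.ext fun v => funext fun pp => ?_
        simpa only [Module.End.mul_apply, LinearMap.add_apply, LinearMap.smul_apply,
          Pi.add_apply, Pi.smul_apply, smul_eq_mul]
          using dd_rel6 q α β la lb n hα hβ hq1 v pp
    refine ⟨RingQuot.liftAlgHom K ⟨FreeAlgebra.lift K g, hrel⟩, ?_, ?_, ?_, ?_⟩
    · show RingQuot.liftAlgHom K ⟨FreeAlgebra.lift K g, hrel⟩
        (RingQuot.mkAlgHom K (DDrel q) (ι K (0 : Fin 4))) = _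
      rw [RingQuot.liftAlgHom_mkAlgHom_apply, lift_ι_apply]
      exact hg0
    · show RingQuot.liftAlgHom K ⟨FreeAlgebra.lift K g, hrel⟩
        (RingQuot.mkAlgHom K (DDrel q) (ι K (1 : Fin 4))) = _
      rw [RingQuot.liftAlgHom_mkAlgHom_apply, lift_ι_apply]
      exact hg1
    · show RingQuot.liftAlgHom K ⟨FreeAlgebra.lift K g, hrel⟩
        (RingQuot.mkAlgHom K (DDrel q) (ι K (2 : Fin 4))) = _
      rw [RingQuot.liftAlgHom_mkAlgHom_apply, lift_ι_apply]
      exact hg2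
    · show RingQuot.liftAlgHom K ⟨FreeAlgebra.lift K g, hrel⟩
        (RingQuot.mkAlgHom K (DDrel q) (ι K (3 : Fin 4))) = _
      rw [RingQuot.liftAlgHom_mkAlgHom_apply, lift_ι_apply]
      exact hg3
  · -- simplicity
    intro W h11 h12 h21 h22
    by_cases hW : W = ⊥
    · exact Or.inl hW
    right
    obtain ⟨v, hvW, hv⟩ := (Submodule.ne_bot_iff W).mp hW
    obtain ⟨p0, hp0⟩ : ∃ p, v p ≠ 0 := by
      by_contra hcon
      push_neg at hcon
      exact hv (funext fun p => hcon p)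
    set d : Fin (n + 1) × Fin (n + 1) → K :=
      fun p => lb * q ^ ((p.2 : ℕ) + 1) * q⁻¹ ^ (p.1 : ℕ) with hd
    set d2 : Fin (n + 1) × Fin (n + 1) → K :=
      fun p => q ^ (p.2 : ℕ) * (la + lb * q⁻¹ ^ (p.1 : ℕ)) with hd2
    have hDc : ∀ u ∈ W, ∀ c : K, (fun p => (d p - c) * u p) ∈ W := by
      intro u hu c
      have he : (fun p => (d p - c) * u p)
          = T12 q β lb (n + 1) (T21 β (n + 1) u) - c • u := by
        funext p
        rw [Pi.sub_apply, Pi.smul_apply, smul_eq_mul, dd_diagD q β lb n hβ hq1 u p]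
        simp only [hd]
        ring
      rw [he]
      exact Submodule.sub_mem W (h12 _ (h21 _ hu)) (Submodule.smul_mem W c hu)
    have hD2c : ∀ u ∈ W, ∀ c : K, (fun p => (d2 p - c) * u p) ∈ W := by
      intro u hu c
      have he : (fun p => (d2 p - c) * u p)
          = T22 q α la lb (n + 1) (T11 q α (n + 1) u) - c • u := by
        funext p
        rw [Pi.sub_apply, Pi.smul_apply, smul_eq_mul, dd_diagD2 q α la lb n hα hq1 u p]
        simp only [hd2]
        ring
      rw [he]
      exact Submodule.sub_mem W (h22 _ (h11 _ hu)) (Submodule.smul_mem W c hu)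
    have hinj : ∀ p p', d p = d p' → d2 p = d2 p' → p = p' := by
      intro p p' hdp hdp2
      simp only [hd] at hdp
      simp only [hd2] at hdp2
      exact dd_inj q la lb n hq1 hq2 hla hlb p p' hdp hdp2
    set gs : (Fin (n + 1) × Fin (n + 1)) → (Fin (n + 1) × Fin (n + 1)) → K :=
      fun p' p => if d p' = d p0 then d2 p - d2 p' else d p - d p' with hgs
    have key : ∀ S : Finset (Fin (n + 1) × Fin (n + 1)),
        (fun p => (∏ p' ∈ S, gs p' p) * v p) ∈ W := by
      intro S
      induction S using Finset.induction_on with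
      | empty => simpa using hvW
      | @insert a S ha ih =>
        by_cases hda : d a = d p0
        · have he : (fun p => (∏ p' ∈ insert a S, gs p' p) * v p)
              = (fun p => (d2 p - d2 a) * ((∏ p' ∈ S, gs p' p) * v p)) := by
            funext p
            rw [Finset.prod_insert ha]
            simp only [hgs, if_pos hda]
            ring
          rw [he]
          exact hD2c _ ih (d2 a)
        · have he : (fun p => (∏ p' ∈ insert a S, gs p' p) * v p)
              = (fun p => (d p - d a) * ((∏ p' ∈ S, gs p' p) * v p)) := by
            funext p
            rw [Finset.prod_insert ha]
            simp only [hgs, if_neg hda]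
            ring
          rw [he]
          exact hDc _ ih (d a)
    have hw := key ({p0}ᶜ : Finset _)
    have hals : (fun p => (∏ p' ∈ ({p0}ᶜ : Finset _), gs p' p) * v p)
        = Pi.single p0 ((∏ p' ∈ ({p0}ᶜ : Finset _), gs p' p0) * v p0) := by
      funext p
      by_cases hp : p = p0
      · subst hp
        rw [Pi.single_eq_same]
      · rw [Pi.single_eq_of_ne hp]
        have hz : (∏ p' ∈ ({p0}ᶜ : Finset _), gs p' p) = 0 := by
          refine Finset.prod_eq_zero (i := p) (Finset.mem_compl.mpr (by simp [hp])) ?_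
          simp only [hgs]
          split_ifs <;> ring
        rw [hz, zero_mul]
    rw [hals] at hw
    have hc0 : ((∏ p' ∈ ({p0}ᶜ : Finset _), gs p' p0) * v p0) ≠ 0 := by
      refine mul_ne_zero ?_ hp0
      rw [Finset.prod_ne_zero_iff]
      intro p' hp'
      have hne : p' ≠ p0 := by simpa using hp'
      simp only [hgs]
      split_ifs with hda
      · exact sub_ne_zero.mpr fun hEq => hne (hinj p' p0 hda hEq.symm)
      · exact sub_ne_zero.mpr fun hEq => hda hEq.symm
    have hstepb : ∀ (x y : Fin (n + 1)) (c : K), c ≠ 0 → Pi.single (x, y) c ∈ W →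
        ∃ c' : K, c' ≠ 0 ∧ Pi.single (x, y + 1) c' ∈ W := by
      intro x y c hc hm
      refine ⟨(if ((y + 1 : Fin (n + 1)) : ℕ) = 0 then β else 1) * c, ?_, ?_⟩
      · split_ifs
        · exact mul_ne_zero hβ hc
        · simpa using hc
      · have hh := h21 _ hm
        rwa [dd_T21_single β n x y c] at hh
    have hstepa : ∀ (x y : Fin (n + 1)) (c : K), c ≠ 0 → Pi.single (x, y) c ∈ W →
        ∃ c' : K, c' ≠ 0 ∧ Pi.single (x + 1, y) c' ∈ W := by
      intro x y c hc hm
      refine ⟨((if ((x + 1 : Fin (n + 1)) : ℕ) = 0 then α else 1) * q ^ (y : ℕ)) * c, ?_, ?_⟩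
      · refine mul_ne_zero (mul_ne_zero ?_ (pow_ne_zero _ hq0)) hc
        split_ifs
        · exact hα
        · exact one_ne_zero
      · have hh := h11 _ hm
        rwa [dd_T11_single q α n x y c] at hh
    have hiterb : ∀ (l : ℕ) (x y : Fin (n + 1)) (c : K), c ≠ 0 → Pi.single (x, y) c ∈ W →
        ∃ c' : K, c' ≠ 0 ∧ Pi.single (x, y + (l : Fin (n + 1))) c' ∈ W := by
      intro l
      induction l with
      | zero => intro x y c hc hm; exact ⟨c, hc, by simpa using hm⟩
      | succ l ih =>
        intro x y c hc hm
        obtain ⟨c1, hc1, hm1⟩ := ih x y c hc hm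
        obtain ⟨c2, hc2, hm2⟩ := hstepb x (y + (l : Fin (n + 1))) c1 hc1 hm1
        refine ⟨c2, hc2, ?_⟩
        have hcast : ((l + 1 : ℕ) : Fin (n + 1)) = (l : Fin (n + 1)) + 1 := by
          push_cast
          ring
        rw [hcast, ← add_assoc]
        exact hm2
    have hitera : ∀ (k : ℕ) (x y : Fin (n + 1)) (c : K), c ≠ 0 → Pi.single (x, y) c ∈ W →
        ∃ c' : K, c' ≠ 0 ∧ Pi.single (x + (k : Fin (n + 1)), y) c' ∈ W := by
      intro k
      induction k with
      | zero => intro x y c hc hm; exact ⟨c, hc, by simpa using hm⟩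
      | succ k ih =>
        intro x y c hc hm
        obtain ⟨c1, hc1, hm1⟩ := ih x y c hc hm
        obtain ⟨c2, hc2, hm2⟩ := hstepa (x + (k : Fin (n + 1))) y c1 hc1 hm1
        refine ⟨c2, hc2, ?_⟩
        have hcast : ((k + 1 : ℕ) : Fin (n + 1)) = (k : Fin (n + 1)) + 1 := by
          push_cast
          ring
        rw [hcast, ← add_assoc]
        exact hm2
    have hall : ∀ p : Fin (n + 1) × Fin (n + 1), ∃ c' : K, c' ≠ 0 ∧ Pi.single p c' ∈ W := by
      rintro ⟨x, y⟩
      have hm0 : Pi.single (p0.1, p0.2) ((∏ p' ∈ ({p0}ᶜ : Finset _), gs p' p0) * v p0) ∈ W := by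
        rw [Prod.mk.eta]
        exact hw
      obtain ⟨c1, hc1, hm1⟩ := hiterb ((y - p0.2) : Fin (n + 1)).val p0.1 p0.2 _ hc0 hm0
      rw [Fin.cast_val_eq_self, show p0.2 + (y - p0.2) = y by ring] at hm1
      obtain ⟨c2, hc2, hm2⟩ := hitera ((x - p0.1) : Fin (n + 1)).val p0.1 y c1 hc1 hm1
      rw [Fin.cast_val_eq_self, show p0.1 + (x - p0.1) = x by ring] at hm2
      exact ⟨c2, hc2, hm2⟩
    rw [Submodule.eq_top_iff']
    intro x
    have hx : x = ∑ p, Pi.single p (x p) := (Finset.univ_sum_single x).symm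
    rw [hx]
    refine Submodule.sum_mem W fun p _ => ?_
    obtain ⟨c', hc', hm⟩ := hall p
    have hsm : Pi.single p (x p) = (x p * c'⁻¹) • (Pi.single p c' : (Fin (n + 1) × Fin (n + 1)) → K) := by
      funext z
      by_cases hz : z = p
      · subst hz
        rw [Pi.smul_apply, Pi.single_eq_same, Pi.single_eq_same, smul_eq_mul]
        field_simp
      · rw [Pi.smul_apply, Pi.single_eq_of_ne hz, Pi.single_eq_of_ne hz, smul_eq_mul,
          mul_zero]
    rw [hsm]
    exact Submodule.smul_mem W _ hm
  · -- dimension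
    rw [Module.finrank_fintype_fun_eq_card, Fintype.card_prod, Fintype.card_fin]
    ring
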